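/- (Poisson equation with divergence-form source on the infinite cluster.) Let d ≥ 2, λ ∈ (0,1], and let a ∈ ({0} ∪ [λ,1])^{B_d} be an environment whose graph of open edges has a unique infinite cluster C_∞. Set E^a_d := {(x,y) ∈ E_d : x,y ∈ C_∞ and a({x,y}) ≠ 0}. Let ξ : E_d → ℝ be antisymmetric with ξ(x,y) = 0 unless both x,y ∈ C_∞ and a({x,y}) ≠ 0, and suppose ⟨ξ, ξ⟩_{C_∞} < ∞. Then: (a) there exists w : C_∞ → ℝ with ⟨∇w, ∇w⟩_{C_∞} < ∞ such that for every h : C_∞ → ℝ with ⟨∇h, ∇h⟩_{C_∞} < ∞, the sums Σ_{(x,y) ∈ E^a_d} ∇w(x,y) a({x,y}) ∇h(x,y) and Σ_{(x,y) ∈ E^a_d} ξ(x,y) ∇h(x,y) converge absolutely and are equal; (b) if w and w' both have this property (with finite Dirichlet energy), then w − w' is constant on C_∞; (c) if (G^e)_{e ∈ E^a_d} is any family of Green's functions as in the Green's function proposition (bounded gradients, finite energy, weak equation ⟨∇G^e, a∇h⟩_{C_∞} = ∇h(e) for all finite-energy h), then for every e' ∈ E^a_d the series Σ_{e ∈ E^a_d}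 ξ(e) ∇G^e(e') converges absolutely and equals ∇w(e'). -/

import Mathlib

open MeasureTheory Filter
open scoped ENNReal Classical

noncomputable section

namespace Perco

/-- Vertices of the lattice `ℤ^d`. -/
abbrev V (d : ℕ) := Fin d → ℤ

/-- Nearest-neighbour adjacency (`ℓ¹`-distance one). -/
def adj {d : ℕ} (x y : V d) : Prop := (∑ i, |x i - y i|) = 1

/-- A bond is an unordered pair of adjacent vertices. -/
def IsBond {d : ℕ} (e : Sym2 (V d)) : Prop := ∃ x y : V d, adj x y ∧ e = s(x, y)

/-- The set of bonds of `ℤ^d`. -/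
abbrev Bond (d : ℕ) := {e : Sym2 (V d) // IsBond e}

/-- An environment assigns a conductance to every bond. -/
abbrev Env (d : ℕ) := Bond d → ℝ

/-- The conductance of the bond `{x, y}` (zero if `x`, `y` are not adjacent). -/
def aOf {d : ℕ} (a : Env d) (x y : V d) : ℝ :=
  if h : adj x y then a ⟨s(x, y), x, y, h, rfl⟩ else 0

/-- The (oriented) edge `(x, y)` is open. -/
def opn {d : ℕ} (a : Env d) (x y : V d) : Prop := adj x y ∧ aOf a x y ≠ 0

/-- Connectivity through open edges. -/
def conn {d : ℕ} (a : Env d) : V d → V d → Prop := Relation.ReflTransGen (opn a)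

/-- `C_∞(a)`: the union of all infinite clusters of the environment `a`. -/
def Cinfty {d : ℕ} (a : Env d) : Set (V d) := {x | {y | conn a x y}.Infinite}

/-- The graph of open edges has a (unique) infinite cluster. -/
def HasUniqueInfiniteCluster {d : ℕ} (a : Env d) : Prop :=
  (Cinfty a).Nonempty ∧ ∀ x ∈ Cinfty a, ∀ y ∈ Cinfty a, conn a x y

/-- The environment takes values in `{0} ∪ [lam, 1]`. -/
def EnvBounds {d : ℕ} (lam : ℝ) (a : Env d) : Prop :=
  ∀ e : Bond d, a e = 0 ∨ a e ∈ Set.Icc lam 1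

/-- The discrete gradient of a function defined on the cluster `C`:
`∇u(x,y) = u x - u y` if `x, y ∈ C` and the edge `{x,y}` is open, and `0` otherwise. -/
def grad {d : ℕ} (a : Env d) (C : Set (V d)) (u : V d → ℝ) (x y : V d) : ℝ :=
  if x ∈ C ∧ y ∈ C ∧ opn a x y then u x - u y else 0

/-- `|F|(x)² = (1/2) ∑_y F(x,y)²` for a vector field `F`. -/
def sqNorm {d : ℕ} (F : V d → V d → ℝ) (x : V d) : ℝ := (1 / 2) * ∑' y, (F x y) ^ 2

/-- `u` is `a`-harmonic at the point `x`. -/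
def HarmonicAt {d : ℕ} (a : Env d) (u : V d → ℝ) (x : V d) : Prop :=
  ∑' y, aOf a x y * (u x - u y) = 0

/-- `u` is `a`-harmonic on the set `C`. -/
def HarmonicOn {d : ℕ} (a : Env d) (C : Set (V d)) (u : V d → ℝ) : Prop :=
  ∀ x ∈ C, HarmonicAt a u x

/-- The closed `ℓ∞` ball of radius `R` in `ℤ^d`. -/
def ballZ (d : ℕ) (R : ℝ) : Set (V d) := {x | ∀ i, (|x i| : ℝ) ≤ R}

/-- The `ℓ∞` distance of two lattice points, as a real number. -/
def distZ {d : ℕ} (x y : V d) : ℝ :=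
  (((Finset.univ.sup fun i => (x i - y i).natAbs) : ℕ) : ℝ)

/-- Embedding of `ℤ^d` into `ℝ^d`. -/
def toR {d : ℕ} (x : V d) : Fin d → ℝ := fun i => (x i : ℝ)

/-- Sum of `f` over the (typically finite) set `S ⊆ ℤ^d`. -/
def setSum {d : ℕ} (S : Set (V d)) (f : V d → ℝ) : ℝ := ∑' x : S, f x.1

/-- Average of `f` over the set `S ⊆ ℤ^d` (zero if `S` is empty or infinite). -/
def setAvg {d : ℕ} (S : Set (V d)) (f : V d → ℝ) : ℝ := (S.ncard : ℝ)⁻¹ * setSum S f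

/-- The dilated triadic cube `r□_m = (-r 3^m/2, r 3^m/2)^d ∩ ℤ^d`. -/
def tcube (d : ℕ) (r : ℝ) (m : ℕ) : Set (V d) := {x | ∀ i, 2 * (|x i| : ℝ) < r * 3 ^ m}

/-- The edge `(x, y)` belongs to `E^a_d`: it is open and both endpoints lie on `C_∞`. -/
def openEdge {d : ℕ} (a : Env d) (x y : V d) : Prop :=
  x ∈ Cinfty a ∧ y ∈ Cinfty a ∧ opn a x y

/-- `u` has finite Dirichlet energy `⟨∇u, ∇u⟩_{C_∞} < ∞`. -/
def FiniteEnergy {d : ℕ} (a : Env d) (u : V d → ℝ) : Prop :=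
  Summable (fun pr : V d × V d => (grad a (Cinfty a) u pr.1 pr.2) ^ 2)

/-- The Dirichlet energy `⟨∇u, ∇u⟩_{C_∞}`. -/
def energy {d : ℕ} (a : Env d) (u : V d → ℝ) : ℝ :=
  ∑' pr : V d × V d, (grad a (Cinfty a) u pr.1 pr.2) ^ 2

/-- `w` is a weak solution of `-∇·(a∇w) = -∇·ξ` on `C_∞`: for every finite-energy `h`,
the pairings `⟨∇w, a∇h⟩_{C_∞}` and `⟨ξ, ∇h⟩_{C_∞}` converge absolutely and coincide. -/
def IsWeakSol {d : ℕ} (a : Env d) (ξ : V d → V d → ℝ) (w : V d → ℝ) : Prop :=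
  ∀ h : V d → ℝ, FiniteEnergy a h →
    Summable (fun pr : V d × V d =>
      |grad a (Cinfty a) w pr.1 pr.2 * aOf a pr.1 pr.2 * grad a (Cinfty a) h pr.1 pr.2|) ∧
    Summable (fun pr : V d × V d => |ξ pr.1 pr.2 * grad a (Cinfty a) h pr.1 pr.2|) ∧
    ∑' pr : V d × V d,
        grad a (Cinfty a) w pr.1 pr.2 * aOf a pr.1 pr.2 * grad a (Cinfty a) h pr.1 pr.2
      = ∑' pr : V d × V d, ξ pr.1 pr.2 * grad a (Cinfty a) h pr.1 pr.2

/-- `G` is a family of Green's functions: for every `e = (x,y) ∈ E^a_d`, the function `G x y`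
has bounded gradient, finite Dirichlet energy, and satisfies
`⟨∇G^e, a∇h⟩_{C_∞} = ∇h(e)` (with absolute convergence) for every finite-energy `h`. -/
def IsGreenFamily {d : ℕ} (a : Env d) (G : V d → V d → V d → ℝ) : Prop :=
  ∀ x y : V d, openEdge a x y →
    (∃ C : ℝ, ∀ x' y' : V d, openEdge a x' y' → |grad a (Cinfty a) (G x y) x' y'| ≤ C) ∧
    FiniteEnergy a (G x y) ∧
    (∀ h : V d → ℝ, FiniteEnergy a h →
      Summable (fun pr : V d × V d =>
        |grad a (Cinfty a) (G x y) pr.1 pr.2 * aOf a pr.1 pr.2 *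
          grad a (Cinfty a) h pr.1 pr.2|) ∧
      ∑' pr : V d × V d,
          grad a (Cinfty a) (G x y) pr.1 pr.2 * aOf a pr.1 pr.2 *
            grad a (Cinfty a) h pr.1 pr.2
        = h x - h y)
section Aux

variable {d : ℕ}

lemma adj_symm {x y : V d} (h : adj x y) : adj y x := by
  unfold adj at *
  simpa only [abs_sub_comm] using h

lemma aOf_symm (a : Env d) (x y : V d) : aOf a x y = aOf a y x := by
  unfold aOf
  by_cases h : adj x y
  · have h' : adj y x := adj_symm h
    rw [dif_pos h, dif_pos h']
    congr 1
    exact Subtype.ext (Sym2.eq_swap)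
  · have h' : ¬ adj y x := fun hh => h (adj_symm hh)
    rw [dif_neg h, dif_neg h']

lemma opn_symm {a : Env d} {x y : V d} (h : opn a x y) : opn a y x :=
  ⟨adj_symm h.1, by rw [← aOf_symm]; exact h.2⟩

lemma conn_symm {a : Env d} {x y : V d} (h : conn a x y) : conn a y x := by
  induction h with
  | refl => exact Relation.ReflTransGen.refl
  | tail _ h2 ih => exact Relation.ReflTransGen.head (opn_symm h2) ih

lemma mem_Cinfty_of_conn {a : Env d} {x z : V d} (hx : x ∈ Cinfty a) (h : conn a x z) :
    z ∈ Cinfty a := by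
  refine Set.Infinite.mono ?_ hx
  intro y hy
  exact Relation.ReflTransGen.trans (conn_symm h) hy

lemma aOf_bounds {lam : ℝ} {a : Env d} (ha : EnvBounds lam a) {x y : V d} (h : opn a x y) :
    lam ≤ aOf a x y ∧ aOf a x y ≤ 1 := by
  have hne := h.2
  unfold aOf at *
  rw [dif_pos h.1] at *
  rcases ha ⟨s(x, y), x, y, h.1, rfl⟩ with h0 | hI
  · exact absurd h0 hne
  · exact ⟨hI.1, hI.2⟩

lemma grad_eq (a : Env d) (u : V d → ℝ) (x y : V d) :
    grad a (Cinfty a) u x y = if openEdge a x y then u x - u y else 0 := by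
  unfold grad openEdge
  congr

lemma grad_eq_zero {a : Env d} {u : V d → ℝ} {x y : V d} (h : ¬ openEdge a x y) :
    grad a (Cinfty a) u x y = 0 := by rw [grad_eq, if_neg h]

lemma grad_eq_of_open {a : Env d} (u : V d → ℝ) {x y : V d} (h : openEdge a x y) :
    grad a (Cinfty a) u x y = u x - u y := by rw [grad_eq, if_pos h]

end Aux
section Aux2

variable {d : ℕ}

/-- abs of product of two square-summable functions is summable -/
lemma summable_abs_mul {α : Type*} {f g : α → ℝ} (hf : Summable fun i => (f i) ^ 2)
    (hg : Summable fun i => (g i) ^ 2) : Summable fun i => |f i * g i| := by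
  refine Summable.of_nonneg_of_le (fun i => abs_nonneg _) (fun i => ?_)
    (((hf.add hg).mul_left (1/2)))
  have := sq_nonneg (|f i| - |g i|)
  rw [abs_mul]
  nlinarith [abs_nonneg (f i), abs_nonneg (g i), sq_abs (f i), sq_abs (g i)]

lemma memℓp_two_of {α : Type*} {f : α → ℝ} (h : Summable fun i => (f i) ^ 2) :
    Memℓp f 2 := by
  apply memℓp_gen
  have : ∀ i, ‖f i‖ ^ (2 : ℝ≥0∞).toReal = (f i) ^ 2 := by
    intro i
    rw [ENNReal.toReal_ofNat, Real.rpow_two, Real.norm_eq_abs, sq_abs]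
  simpa only [this] using h

lemma summable_sq_of_memℓp {α : Type*} {f : α → ℝ} (h : Memℓp f 2) :
    Summable fun i => (f i) ^ 2 := by
  have h2 := (memℓp_gen_iff (p := 2) (by norm_num)).1 h
  have : ∀ i, ‖f i‖ ^ (2 : ℝ≥0∞).toReal = (f i) ^ 2 := by
    intro i
    rw [ENNReal.toReal_ofNat, Real.rpow_two, Real.norm_eq_abs, sq_abs]
  simpa only [this] using h2

/-- the `√a`-weighted gradient of `u`, as a function on ordered pairs -/
def sgrad (a : Env d) (u : V d → ℝ) : V d × V d → ℝ :=
  fun pr => Real.sqrt (aOf a pr.1 pr.2) * grad a (Cinfty a) u pr.1 pr.2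

lemma sgrad_sq_le {lam : ℝ} (hlam0 : 0 < lam) {a : Env d} (ha : EnvBounds lam a) (u : V d → ℝ)
    (pr : V d × V d) : (sgrad a u pr) ^ 2 ≤ (grad a (Cinfty a) u pr.1 pr.2) ^ 2 := by
  by_cases h : openEdge a pr.1 pr.2
  · have hb := aOf_bounds ha h.2.2
    have h0 : (0:ℝ) ≤ aOf a pr.1 pr.2 := le_trans hlam0.le hb.1
    rw [sgrad, mul_pow, Real.sq_sqrt h0]
    nlinarith [sq_nonneg (grad a (Cinfty a) u pr.1 pr.2)]
  · simp [sgrad, grad_eq_zero h]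

/-- pointwise: `sgrad w * sgrad h = ∇w · a · ∇h`. -/
lemma sgrad_mul {lam : ℝ} (hlam0 : 0 < lam) {a : Env d} (ha : EnvBounds lam a)
    (u v : V d → ℝ) (pr : V d × V d) :
    sgrad a u pr * sgrad a v pr
      = grad a (Cinfty a) u pr.1 pr.2 * aOf a pr.1 pr.2 * grad a (Cinfty a) v pr.1 pr.2 := by
  by_cases h : openEdge a pr.1 pr.2
  · have hb := aOf_bounds ha h.2.2
    have h0 : (0:ℝ) ≤ aOf a pr.1 pr.2 := le_trans hlam0.le hb.1
    simp only [sgrad]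
    rw [show ∀ s g g' : ℝ, (s * g) * (s * g') = (s * s) * g * g' by intros; ring,
      Real.mul_self_sqrt h0]
    ring
  · simp [sgrad, grad_eq_zero h]

lemma finiteEnergy_sgrad_memℓp {lam : ℝ} (hlam0 : 0 < lam) {a : Env d} (ha : EnvBounds lam a)
    {u : V d → ℝ} (hu : FiniteEnergy a u) : Memℓp (sgrad a u) 2 :=
  memℓp_two_of (Summable.of_nonneg_of_le (fun _ => sq_nonneg _)
    (sgrad_sq_le hlam0 ha u) hu)

lemma grad_sub (a : Env d) (u v : V d → ℝ) (x y : V d) :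
    grad a (Cinfty a) (u - v) x y = grad a (Cinfty a) u x y - grad a (Cinfty a) v x y := by
  by_cases h : openEdge a x y
  · simp only [grad_eq_of_open _ h, Pi.sub_apply]; ring
  · simp [grad_eq_zero h]

lemma finiteEnergy_sub {a : Env d} {u v : V d → ℝ} (hu : FiniteEnergy a u)
    (hv : FiniteEnergy a v) : FiniteEnergy a (u - v) := by
  refine Summable.of_nonneg_of_le (fun _ => sq_nonneg _) (fun pr => ?_)
    (((hu.mul_left 2).add (hv.mul_left 2)))
  rw [grad_sub]
  nlinarith [sq_nonneg (grad a (Cinfty a) u pr.1 pr.2 + grad a (Cinfty a) v pr.1 pr.2)]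

end Aux2
section Aux3

variable {d : ℕ}

lemma grad_add (a : Env d) (u v : V d → ℝ) (x y : V d) :
    grad a (Cinfty a) (u + v) x y = grad a (Cinfty a) u x y + grad a (Cinfty a) v x y := by
  by_cases h : openEdge a x y
  · simp only [grad_eq_of_open _ h, Pi.add_apply]; ring
  · simp [grad_eq_zero h]

lemma grad_smul (a : Env d) (c : ℝ) (u : V d → ℝ) (x y : V d) :
    grad a (Cinfty a) (c • u) x y = c * grad a (Cinfty a) u x y := by
  by_cases h : openEdge a x y
  · simp only [grad_eq_of_open _ h, Pi.smul_apply, smul_eq_mul]; ring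
  · simp [grad_eq_zero h]

lemma finiteEnergy_add {a : Env d} {u v : V d → ℝ} (hu : FiniteEnergy a u)
    (hv : FiniteEnergy a v) : FiniteEnergy a (u + v) := by
  refine Summable.of_nonneg_of_le (fun _ => sq_nonneg _) (fun pr => ?_)
    (((hu.mul_left 2).add (hv.mul_left 2)))
  rw [grad_add]
  nlinarith [sq_nonneg (grad a (Cinfty a) u pr.1 pr.2 - grad a (Cinfty a) v pr.1 pr.2)]

lemma finiteEnergy_smul {a : Env d} (c : ℝ) {u : V d → ℝ} (hu : FiniteEnergy a u) :
    FiniteEnergy a (c • u) := by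
  have : (fun pr : V d × V d => (grad a (Cinfty a) (c • u) pr.1 pr.2) ^ 2)
      = fun pr => c ^ 2 * (grad a (Cinfty a) u pr.1 pr.2) ^ 2 := by
    funext pr; rw [grad_smul]; ring
  rw [FiniteEnergy, this]
  exact hu.mul_left _

lemma finiteEnergy_zero (a : Env d) : FiniteEnergy a (0 : V d → ℝ) := by
  have : (fun pr : V d × V d => (grad a (Cinfty a) (0 : V d → ℝ) pr.1 pr.2) ^ 2)
      = fun _ => 0 := by
    funext pr
    by_cases h : openEdge a pr.1 pr.2
    · simp [grad_eq_of_open _ h]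
    · simp [grad_eq_zero h]
  rw [FiniteEnergy, this]
  exact summable_zero

/-- The space of `√a`-weighted gradients of finite-energy functions, inside `ℓ²`. -/
def gradSubmodule (a : Env d) : Submodule ℝ (lp (fun _ : V d × V d => ℝ) 2) where
  carrier := {f | ∃ w : V d → ℝ, FiniteEnergy a w ∧ ∀ pr, f pr = sgrad a w pr}
  zero_mem' := ⟨0, finiteEnergy_zero a, fun pr => by
    simp only [lp.coeFn_zero, Pi.zero_apply, sgrad]
    by_cases h : openEdge a pr.1 pr.2
    · simp [grad_eq_of_open _ h]
    · simp [grad_eq_zero h]⟩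
  add_mem' := by
    rintro f g ⟨u, hu, hfu⟩ ⟨v, hv, hgv⟩
    exact ⟨u + v, finiteEnergy_add hu hv, fun pr => by
      simp only [lp.coeFn_add, Pi.add_apply, hfu pr, hgv pr, sgrad, grad_add]; ring⟩
  smul_mem' := by
    rintro c f ⟨u, hu, hfu⟩
    exact ⟨c • u, finiteEnergy_smul c hu, fun pr => by
      simp only [lp.coeFn_smul, Pi.smul_apply, hfu pr, sgrad, grad_smul, smul_eq_mul]; ring⟩

end Aux3
section Aux4

open Topology

variable {d : ℕ}

set_option synthInstance.maxHeartbeats 1000000 in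
set_option maxHeartbeats 1000000 in
lemma isClosed_gradSubmodule {lam : ℝ} (hlam0 : 0 < lam) {a : Env d}
    (ha : EnvBounds lam a) (huniq : HasUniqueInfiniteCluster a) :
    IsClosed ((gradSubmodule a : Set (lp (fun _ : V d × V d => ℝ) 2))) := by
  apply IsSeqClosed.isClosed
  intro F f hmem hlim
  choose h hE hrepr using hmem
  -- pointwise convergence
  have hpt : ∀ pr : V d × V d, Tendsto (fun n => F n pr) atTop (𝓝 (f pr)) := by
    intro pr
    have hnorm : Tendsto (fun n => ‖F n - f‖) atTop (𝓝 0) :=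
      tendsto_iff_norm_sub_tendsto_zero.mp hlim
    have hb : ∀ n, ‖F n pr - f pr‖ ≤ ‖F n - f‖ := by
      intro n
      have := lp.norm_apply_le_norm (E := fun _ : V d × V d => ℝ) (p := 2)
        (by norm_num) (F n - f) pr
      simpa [lp.coeFn_sub] using this
    have := squeeze_zero_norm hb hnorm
    simpa [tendsto_sub_nhds_zero_iff] using this
  obtain ⟨x₀, hx₀⟩ := huniq.1
  -- convergence of h n x - h n x₀ along the cluster
  have key : ∀ x : V d, conn a x₀ x →
      ∃ L : ℝ, Tendsto (fun n => h n x - h n x₀) atTop (𝓝 L) := by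
    intro x hc
    induction hc with
    | refl => exact ⟨0, by simpa using (tendsto_const_nhds :
        Tendsto (fun _ : ℕ => (0:ℝ)) atTop (𝓝 0))⟩
    | @tail b c hconn hstep ih =>
      obtain ⟨L, hL⟩ := ih
      have hbC : b ∈ Cinfty a := mem_Cinfty_of_conn hx₀ hconn
      have hcC : c ∈ Cinfty a := mem_Cinfty_of_conn hx₀ (hconn.tail hstep)
      have hoe : openEdge a c b := ⟨hcC, hbC, opn_symm hstep⟩
      have hsp : 0 < Real.sqrt (aOf a c b) :=
        Real.sqrt_pos.mpr (lt_of_lt_of_le hlam0 (aOf_bounds ha hoe.2.2).1)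
      have hcb : ∀ n, h n c - h n b = F n (c, b) / Real.sqrt (aOf a c b) := by
        intro n
        have := hrepr n (c, b)
        rw [sgrad, grad_eq_of_open _ hoe] at this
        rw [this]
        field_simp
      have t1 : Tendsto (fun n => h n c - h n b) atTop
          (𝓝 (f (c, b) / Real.sqrt (aOf a c b))) := by
        simp only [hcb]
        exact (hpt (c, b)).div_const _
      refine ⟨f (c, b) / Real.sqrt (aOf a c b) + L, ?_⟩
      have := t1.add hL
      convert this using 2 with n
      ring
  -- the limit function
  set w : V d → ℝ := fun x =>
    if hx : x ∈ Cinfty a then (key x (huniq.2 x₀ hx₀ x hx)).choose else 0 with hwdef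
  have hw : ∀ x (hx : x ∈ Cinfty a),
      Tendsto (fun n => h n x - h n x₀) atTop (𝓝 (w x)) := by
    intro x hx
    rw [hwdef]
    simp only [dif_pos hx]
    exact (key x (huniq.2 x₀ hx₀ x hx)).choose_spec
  -- f is the weighted gradient of w
  have hval : ∀ pr : V d × V d, f pr = sgrad a w pr := by
    intro pr
    by_cases hoe : openEdge a pr.1 pr.2
    · have t1 : Tendsto (fun n => h n pr.1 - h n pr.2) atTop (𝓝 (w pr.1 - w pr.2)) := by
        have := (hw pr.1 hoe.1).sub (hw pr.2 hoe.2.1)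
        simpa [sub_sub_sub_cancel_right] using this
      have t2 : Tendsto (fun n => F n pr) atTop
          (𝓝 (Real.sqrt (aOf a pr.1 pr.2) * (w pr.1 - w pr.2))) := by
        have : (fun n => F n pr)
            = fun n => Real.sqrt (aOf a pr.1 pr.2) * (h n pr.1 - h n pr.2) := by
          funext n
          rw [hrepr n pr, sgrad, grad_eq_of_open _ hoe]
        rw [this]
        exact t1.const_mul _
      have := tendsto_nhds_unique (hpt pr) t2
      rw [this, sgrad, grad_eq_of_open _ hoe]
    · have t2 : Tendsto (fun n => F n pr) atTop (𝓝 0) := by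
        have : (fun n => F n pr) = fun _ => (0:ℝ) := by
          funext n
          rw [hrepr n pr, sgrad, grad_eq_zero hoe, mul_zero]
        rw [this]
        exact tendsto_const_nhds
      have := tendsto_nhds_unique (hpt pr) t2
      rw [this, sgrad, grad_eq_zero hoe, mul_zero]
  -- w has finite energy
  have hfe : FiniteEnergy a w := by
    have fsq : Summable fun pr : V d × V d => (f pr) ^ 2 :=
      summable_sq_of_memℓp (lp.memℓp f)
    refine Summable.of_nonneg_of_le (fun _ => sq_nonneg _) (fun pr => ?_)
      (fsq.mul_left lam⁻¹)
    by_cases hoe : openEdge a pr.1 pr.2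
    · have hb := aOf_bounds ha hoe.2.2
      have h0 : (0:ℝ) ≤ aOf a pr.1 pr.2 := le_trans hlam0.le hb.1
      have hf2 : (f pr) ^ 2 = aOf a pr.1 pr.2 * (grad a (Cinfty a) w pr.1 pr.2) ^ 2 := by
        rw [hval pr, sgrad, mul_pow, Real.sq_sqrt h0]
      have hle : lam * (grad a (Cinfty a) w pr.1 pr.2) ^ 2 ≤ (f pr) ^ 2 := by
        nlinarith [sq_nonneg (grad a (Cinfty a) w pr.1 pr.2)]
      calc (grad a (Cinfty a) w pr.1 pr.2) ^ 2
          = lam⁻¹ * (lam * (grad a (Cinfty a) w pr.1 pr.2) ^ 2) := by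
            field_simp
        _ ≤ lam⁻¹ * (f pr) ^ 2 :=
            mul_le_mul_of_nonneg_left hle (inv_pos.mpr hlam0).le
    · rw [grad_eq_zero hoe]
      have : (0:ℝ) ≤ lam⁻¹ * (f pr) ^ 2 := by positivity
      simpa using this
  exact ⟨w, hfe, hval⟩

end Aux4
section Aux5

variable {d : ℕ}

lemma summable_sq_sgrad {lam : ℝ} (hlam0 : 0 < lam) {a : Env d} (ha : EnvBounds lam a)
    {u : V d → ℝ} (hu : FiniteEnergy a u) :
    Summable fun pr : V d × V d => (sgrad a u pr) ^ 2 :=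
  Summable.of_nonneg_of_le (fun _ => sq_nonneg _) (sgrad_sq_le hlam0 ha u) hu

lemma inner_lp_eq {α : Type*} (f g : lp (fun _ : α => ℝ) 2) :
    (inner ℝ f g : ℝ) = ∑' i, f i * g i := by
  rw [lp.inner_eq_tsum]
  simp [RCLike.inner_apply, conj_trivial, mul_comm]

/-- the pairing `⟨∇u, a∇v⟩` equals `∑ sgrad u · sgrad v` pointwise, hence in total. -/
lemma pairing_fun_eq {lam : ℝ} (hlam0 : 0 < lam) {a : Env d} (ha : EnvBounds lam a)
    (u v : V d → ℝ) :
    (fun pr : V d × V d =>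
        grad a (Cinfty a) u pr.1 pr.2 * aOf a pr.1 pr.2 * grad a (Cinfty a) v pr.1 pr.2)
      = fun pr => sgrad a u pr * sgrad a v pr :=
  funext fun pr => (sgrad_mul hlam0 ha u v pr).symm

end Aux5
set_option maxHeartbeats 1000000 in
set_option synthInstance.maxHeartbeats 1000000 in

/-- Poisson equation with divergence-form source on the infinite cluster.
For square-summable antisymmetric `ξ` supported on the open edges of `C_∞`:
(a) there is a finite-energy weak solution `w` of `-∇·(a∇w) = -∇·ξ` on `C_∞`;
(b) the solution is unique up to an additive constant;
(c) for any family of Green's functions, `∇w(e') = Σ_e ξ(e) ∇G^e(e')` with absolute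
convergence. -/
theorem statement5 (d : ℕ) (hd : 2 ≤ d) (lam : ℝ) (hlam0 : 0 < lam) (hlam1 : lam ≤ 1)
    (a : Env d) (ha : EnvBounds lam a) (huniq : HasUniqueInfiniteCluster a)
    (ξ : V d → V d → ℝ) (hanti : ∀ x y, ξ x y = -ξ y x)
    (hsupp : ∀ x y, ¬ openEdge a x y → ξ x y = 0)
    (hL2 : Summable fun pr : V d × V d => (ξ pr.1 pr.2) ^ 2) :
    (∃ w : V d → ℝ, FiniteEnergy a w ∧ IsWeakSol a ξ w) ∧
    (∀ w w' : V d → ℝ, FiniteEnergy a w → IsWeakSol a ξ w →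
      FiniteEnergy a w' → IsWeakSol a ξ w' →
      ∀ x ∈ Cinfty a, ∀ y ∈ Cinfty a, w x - w' x = w y - w' y) ∧
    (∀ G : V d → V d → V d → ℝ, IsGreenFamily a G →
      ∀ w : V d → ℝ, FiniteEnergy a w → IsWeakSol a ξ w →
        ∀ x' y' : V d, openEdge a x' y' →
          Summable (fun pr : V d × V d =>
            |ξ pr.1 pr.2 * grad a (Cinfty a) (G pr.1 pr.2) x' y'|) ∧
          ∑' pr : V d × V d, ξ pr.1 pr.2 * grad a (Cinfty a) (G pr.1 pr.2) x' y'
            = grad a (Cinfty a) w x' y') := by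
  -- the source term `ξ/√a` as an element of ℓ²
  set gfun : V d × V d → ℝ := fun pr =>
    if openEdge a pr.1 pr.2 then ξ pr.1 pr.2 / Real.sqrt (aOf a pr.1 pr.2) else 0 with hgdef
  have hgsq : Summable fun pr : V d × V d => (gfun pr) ^ 2 := by
    refine Summable.of_nonneg_of_le (fun _ => sq_nonneg _) (fun pr => ?_) (hL2.mul_left lam⁻¹)
    rw [hgdef]
    by_cases h : openEdge a pr.1 pr.2
    · have hb := aOf_bounds ha h.2.2
      have h0 : (0:ℝ) < aOf a pr.1 pr.2 := lt_of_lt_of_le hlam0 hb.1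
      simp only [if_pos h]
      rw [div_pow, Real.sq_sqrt h0.le]
      calc ξ pr.1 pr.2 ^ 2 / aOf a pr.1 pr.2 ≤ ξ pr.1 pr.2 ^ 2 / lam :=
            div_le_div_of_nonneg_left (sq_nonneg _) hlam0 hb.1
        _ = lam⁻¹ * ξ pr.1 pr.2 ^ 2 := by rw [div_eq_inv_mul]
    · simp only [if_neg h]
      have : (0:ℝ) ≤ lam⁻¹ * ξ pr.1 pr.2 ^ 2 := by positivity
      simpa using this
  -- pointwise : `ξ ∇h = gfun · sgrad h`
  have hgpt : ∀ (h : V d → ℝ) (pr : V d × V d),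
      ξ pr.1 pr.2 * grad a (Cinfty a) h pr.1 pr.2 = gfun pr * sgrad a h pr := by
    intro h pr
    rw [hgdef]
    by_cases hoe : openEdge a pr.1 pr.2
    · have hb := aOf_bounds ha hoe.2.2
      have h0 : (0:ℝ) < Real.sqrt (aOf a pr.1 pr.2) :=
        Real.sqrt_pos.mpr (lt_of_lt_of_le hlam0 hb.1)
      simp only [if_pos hoe, sgrad]
      field_simp
    · simp only [if_neg hoe, grad_eq_zero hoe, hsupp pr.1 pr.2 hoe, zero_mul, mul_zero]
  set glp : lp (fun _ : V d × V d => ℝ) 2 := ⟨gfun, memℓp_two_of hgsq⟩ with hglp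
  set K : Submodule ℝ (lp (fun _ : V d × V d => ℝ) 2) := gradSubmodule a with hK
  haveI : CompleteSpace K := (isClosed_gradSubmodule hlam0 ha huniq).completeSpace_coe
  set p : lp (fun _ : V d × V d => ℝ) 2 := ((K.orthogonalProjectionOnto glp : K) : lp (fun _ : V d × V d => ℝ) 2) with hp
  have hpK : p ∈ K := (K.orthogonalProjectionOnto glp).2
  obtain ⟨w₀, hw₀E, hw₀⟩ := hpK
  have hperp : ∀ k, k ∈ K → (inner ℝ k (glp - p) : ℝ) = 0 := by
    intro k hk
    have := Submodule.sub_starProjection_mem_orthogonal (K := K) glp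
    exact (Submodule.mem_orthogonal K (glp - p)).1 this k hk
  -- the weak solution property for `w₀`
  have hsol : IsWeakSol a ξ w₀ := by
    intro h hfE
    set fh : lp (fun _ : V d × V d => ℝ) 2 :=
      ⟨sgrad a h, finiteEnergy_sgrad_memℓp hlam0 ha hfE⟩ with hfh
    have hfhK : fh ∈ K := ⟨h, hfE, fun pr => rfl⟩
    have hfhapp : ∀ pr, fh pr = sgrad a h pr := fun pr => rfl
    refine ⟨?_, ?_, ?_⟩
    · have heq : (fun pr : V d × V d =>
          |grad a (Cinfty a) w₀ pr.1 pr.2 * aOf a pr.1 pr.2 * grad a (Cinfty a) h pr.1 pr.2|)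
          = fun pr => |sgrad a w₀ pr * sgrad a h pr| :=
        funext fun pr => by rw [← sgrad_mul hlam0 ha w₀ h pr]
      rw [heq]
      exact summable_abs_mul (summable_sq_sgrad hlam0 ha hw₀E)
        (summable_sq_sgrad hlam0 ha hfE)
    · have : (fun pr : V d × V d => |ξ pr.1 pr.2 * grad a (Cinfty a) h pr.1 pr.2|)
          = fun pr => |gfun pr * sgrad a h pr| := by
        funext pr; rw [hgpt h pr]
      rw [this]
      exact summable_abs_mul hgsq (summable_sq_sgrad hlam0 ha hfE)
    · have e1 : ∑' pr : V d × V d,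
          grad a (Cinfty a) w₀ pr.1 pr.2 * aOf a pr.1 pr.2 * grad a (Cinfty a) h pr.1 pr.2
          = (inner ℝ p fh : ℝ) := by
        rw [pairing_fun_eq hlam0 ha w₀ h, inner_lp_eq]
        refine tsum_congr fun pr => ?_
        rw [hw₀ pr, hfhapp pr]
      have e2 : ∑' pr : V d × V d, ξ pr.1 pr.2 * grad a (Cinfty a) h pr.1 pr.2
          = (inner ℝ glp fh : ℝ) := by
        rw [inner_lp_eq]
        exact tsum_congr fun pr => hgpt h pr
      have e3 : (inner ℝ p fh : ℝ) = (inner ℝ glp fh : ℝ) := by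
        have h0 := hperp fh hfhK
        rw [inner_sub_right] at h0
        have heq := sub_eq_zero.mp h0
        calc (inner ℝ p fh : ℝ) = inner ℝ fh p := real_inner_comm _ _
          _ = inner ℝ fh glp := heq.symm
          _ = inner ℝ glp fh := real_inner_comm _ _
      rw [e1, e2, e3]
  refine ⟨⟨w₀, hw₀E, hsol⟩, ?_, ?_⟩
  · -- uniqueness up to constants
    intro w w' hwE hwS hw'E hw'S x hx y hy
    set u : V d → ℝ := w - w' with hu
    have huE : FiniteEnergy a u := finiteEnergy_sub hwE hw'E
    obtain ⟨S1, -, eq1⟩ := hwS u huE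
    obtain ⟨S1', -, eq2⟩ := hw'S u huE
    have hsum_u : Summable (fun pr : V d × V d =>
        grad a (Cinfty a) u pr.1 pr.2 * aOf a pr.1 pr.2 * grad a (Cinfty a) u pr.1 pr.2) := by
      rw [pairing_fun_eq hlam0 ha u u]
      have : (fun pr : V d × V d => sgrad a u pr * sgrad a u pr)
          = fun pr => (sgrad a u pr) ^ 2 := funext fun pr => (sq (sgrad a u pr)).symm
      rw [this]
      exact summable_sq_sgrad hlam0 ha huE
    have hdiff : (fun pr : V d × V d =>
        grad a (Cinfty a) w pr.1 pr.2 * aOf a pr.1 pr.2 * grad a (Cinfty a) u pr.1 pr.2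
        - grad a (Cinfty a) w' pr.1 pr.2 * aOf a pr.1 pr.2 * grad a (Cinfty a) u pr.1 pr.2)
        = fun pr => grad a (Cinfty a) u pr.1 pr.2 * aOf a pr.1 pr.2
            * grad a (Cinfty a) u pr.1 pr.2 := by
      funext pr
      rw [hu, grad_sub]
      ring
    have htsum0 : ∑' pr : V d × V d,
        grad a (Cinfty a) u pr.1 pr.2 * aOf a pr.1 pr.2 * grad a (Cinfty a) u pr.1 pr.2
        = 0 := by
      rw [← hdiff, Summable.tsum_sub S1.of_abs S1'.of_abs, eq1, eq2, sub_self]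
    have hnn : ∀ pr : V d × V d,
        0 ≤ grad a (Cinfty a) u pr.1 pr.2 * aOf a pr.1 pr.2 * grad a (Cinfty a) u pr.1 pr.2 := by
      intro pr
      by_cases hoe : openEdge a pr.1 pr.2
      · have h0 : (0:ℝ) ≤ aOf a pr.1 pr.2 :=
          le_trans hlam0.le (aOf_bounds ha hoe.2.2).1
        nlinarith [sq_nonneg (grad a (Cinfty a) u pr.1 pr.2)]
      · rw [grad_eq_zero hoe]
        simp
    have hterm0 : ∀ pr : V d × V d,
        grad a (Cinfty a) u pr.1 pr.2 * aOf a pr.1 pr.2 * grad a (Cinfty a) u pr.1 pr.2 = 0 := by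
      intro pr
      have hle := Summable.le_tsum hsum_u pr (fun j _ => hnn j)
      rw [htsum0] at hle
      exact le_antisymm hle (hnn pr)
    have hgrad0 : ∀ z z' : V d, grad a (Cinfty a) u z z' = 0 := by
      intro z z'
      by_cases hoe : openEdge a z z'
      · have h0 : (0:ℝ) < aOf a z z' := lt_of_lt_of_le hlam0 (aOf_bounds ha hoe.2.2).1
        have ht := hterm0 (z, z')
        simp only at ht
        have hsq : (grad a (Cinfty a) u z z') ^ 2 * aOf a z z' = 0 := by
          rw [← ht]; ring
        rcases mul_eq_zero.mp hsq with h1 | h1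
        · exact pow_eq_zero_iff two_ne_zero |>.mp h1
        · exact absurd h1 h0.ne'
      · exact grad_eq_zero hoe
    have hstepconst : ∀ z : V d, conn a x z → u x = u z := by
      intro z hz
      induction hz with
      | refl => rfl
      | @tail b c hconn hstep ih =>
        have hbC : b ∈ Cinfty a := mem_Cinfty_of_conn hx hconn
        have hcC : c ∈ Cinfty a := mem_Cinfty_of_conn hx (hconn.tail hstep)
        have hoe : openEdge a b c := ⟨hbC, hcC, hstep⟩
        have := hgrad0 b c
        rw [grad_eq_of_open _ hoe] at this
        rw [ih, ← sub_eq_zero]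
        linarith
    have := hstepconst y (huniq.2 x hx y hy)
    simpa [hu, Pi.sub_apply] using this
  · -- Green representation
    intro G hG w hwE hwS x' y' he'
    obtain ⟨-, hfeG', hweak'⟩ := hG x' y' he'
    have hsym : ∀ x y : V d, openEdge a x y →
        grad a (Cinfty a) (G x y) x' y' = grad a (Cinfty a) (G x' y') x y := by
      intro x y hxy
      obtain ⟨-, hfeG, hweak⟩ := hG x y hxy
      have e1 := (hweak (G x' y') hfeG').2
      have e2 := (hweak' (G x y) hfeG).2
      have hcomm : (fun pr : V d × V d =>
          grad a (Cinfty a) (G x y) pr.1 pr.2 * aOf a pr.1 pr.2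
            * grad a (Cinfty a) (G x' y') pr.1 pr.2)
          = fun pr => grad a (Cinfty a) (G x' y') pr.1 pr.2 * aOf a pr.1 pr.2
            * grad a (Cinfty a) (G x y) pr.1 pr.2 := funext fun pr => by ring
      rw [grad_eq_of_open _ he', grad_eq_of_open _ hxy, ← e2, ← e1, hcomm]
    have hpt : ∀ pr : V d × V d,
        ξ pr.1 pr.2 * grad a (Cinfty a) (G pr.1 pr.2) x' y'
        = ξ pr.1 pr.2 * grad a (Cinfty a) (G x' y') pr.1 pr.2 := by
      intro pr
      by_cases hoe : openEdge a pr.1 pr.2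
      · rw [hsym pr.1 pr.2 hoe]
      · rw [hsupp pr.1 pr.2 hoe, zero_mul, zero_mul]
    obtain ⟨-, S2, heq⟩ := hwS (G x' y') hfeG'
    constructor
    · have : (fun pr : V d × V d => |ξ pr.1 pr.2 * grad a (Cinfty a) (G pr.1 pr.2) x' y'|)
          = fun pr => |ξ pr.1 pr.2 * grad a (Cinfty a) (G x' y') pr.1 pr.2| :=
        funext fun pr => by rw [hpt pr]
      rw [this]
      exact S2
    · rw [tsum_congr hpt, ← heq]
      have hcomm2 : (fun pr : V d × V d =>
          grad a (Cinfty a) w pr.1 pr.2 * aOf a pr.1 pr.2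
            * grad a (Cinfty a) (G x' y') pr.1 pr.2)
          = fun pr => grad a (Cinfty a) (G x' y') pr.1 pr.2 * aOf a pr.1 pr.2
            * grad a (Cinfty a) w pr.1 pr.2 := funext fun pr => by ring
      calc ∑' pr : V d × V d, grad a (Cinfty a) w pr.1 pr.2 * aOf a pr.1 pr.2
            * grad a (Cinfty a) (G x' y') pr.1 pr.2
          = ∑' pr : V d × V d, grad a (Cinfty a) (G x' y') pr.1 pr.2 * aOf a pr.1 pr.2
            * grad a (Cinfty a) w pr.1 pr.2 := by rw [hcomm2]
        _ = w x' - w y' := (hweak' w hwE).2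
        _ = grad a (Cinfty a) w x' y' := (grad_eq_of_open _ he').symm

end Perco
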